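/- GMC maximum principle theorem: let Δt, |K_i| > 0, a_i > 0, γ ≥ 0, and u^{min} ≤ u_i^{n} ≤ u^{max}. Suppose ū_i ∈ ℝ satisfies u^{min} ≤ ū_i ≤ u^{max}, and define ū_i^* = ū_i + (1/a_i) C_i where the correction C_i satisfies a_i[(u^{min} − ū_i) + γ(u^{min} − u_i^{n+1})] ≤ C_i ≤ a_i[(u^{max} − ū_i) + γ(u^{max} − u_i^{n+1})]. Let g_i = u_i^{n+1} + (ū_i^* − u_i^{n+1})/(1+γ) and suppose u_i^{n+1} satisfies u_i^{n+1} = u_i^{n} + (Δt/|K_i|) a_i (1+γ)(g_i − u_i^{n+1}). Then u^{min} ≤ u_i^{n+1} ≤ u^{max}, with no restriction on Δt. -/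

import Mathlib

theorem gmc_maximum_principle
    (Δt Ki ai γ umin umax un unew ubar Ci : ℝ)
    (hΔt : 0 < Δt) (hK : 0 < Ki) (hai : 0 < ai) (hγ : 0 ≤ γ)
    (hun : umin ≤ un ∧ un ≤ umax)
    (hubar : umin ≤ ubar ∧ ubar ≤ umax)
    (hC : ai * ((umin - ubar) + γ * (umin - unew)) ≤ Ci ∧
          Ci ≤ ai * ((umax - ubar) + γ * (umax - unew)))
    (ustar : ℝ) (hustar : ustar = ubar + (1 / ai) * Ci)
    (g : ℝ) (hg : g = unew + (ustar - unew) / (1 + γ))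
    (hscheme : unew = un + (Δt / Ki) * ai * (1 + γ) * (g - unew)) :
    umin ≤ unew ∧ unew ≤ umax := by
  have hγ1 : (0:ℝ) < 1 + γ := by linarith
  have hc : 0 < Δt / Ki := div_pos hΔt hK
  have hgg : (1 + γ) * (g - unew) = ustar - unew := by
    rw [hg]; field_simp; ring
  have hkey : unew = un + (Δt / Ki) * ai * (ustar - unew) := by
    linear_combination hscheme + (Δt / Ki * ai) * hgg
  have hstar : ai * ustar = ai * ubar + Ci := by
    rw [hustar]; field_simp
  obtain ⟨h1, h2⟩ := hC
  obtain ⟨h3, h4⟩ := hun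
  obtain ⟨h5, h6⟩ := hubar
  constructor
  · nlinarith [mul_pos hc hai, mul_le_mul_of_nonneg_left h1 (le_of_lt (mul_pos hc (one_div_pos.mpr hai))), mul_nonneg (le_of_lt (mul_pos hc hai)) hγ]
  · nlinarith [mul_pos hc hai, mul_nonneg (le_of_lt (mul_pos hc hai)) hγ]
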